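/- Let P_n be the distribution of X_n where X_0 = 0, X_{n+1} = 2 X_n + b_n mod p, p = 2^t - 1, b_n i.i.d. with P(b_n=1)=a, P(b_n=0)=b, P(b_n=-1)=c, and let f(k) = sum_{j=0}^{t-1} q^{k 2^j} with q = exp(2 pi i/p). If n = r t, then E_{P_n}(f) = t * Pi_1^r, where Pi_1 = prod_{alpha=0}^{t-1} (a q^{2^alpha} + b + c q^{-2^alpha}). -/

import Mathlib

set_option linter.unusedSectionVars false

section auxESF
variable {p : ℕ} [NeZero p] {ζ : ℂ}

lemma esf_pow_mod (hζ : ζ ^ p = 1) (m : ℕ) : ζ ^ (m % p) = ζ ^ m := by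
  conv_rhs => rw [← Nat.div_add_mod m p]
  rw [pow_add, pow_mul, hζ, one_pow, one_mul]

lemma esf_ee_add (hζ : ζ ^ p = 1) (x y : ZMod p) :
    ζ ^ (x + y).val = ζ ^ x.val * ζ ^ y.val := by
  rw [ZMod.val_add, esf_pow_mod hζ, pow_add]

lemma esf_ee_natCast (hζ : ζ ^ p = 1) (m : ℕ) : ζ ^ ((m : ZMod p)).val = ζ ^ m := by
  rw [ZMod.val_natCast, esf_pow_mod hζ]

lemma esf_ee_neg (hζ : ζ ^ p = 1) (x : ZMod p) :
    ζ ^ (-x).val = (ζ ^ x.val)⁻¹ := by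
  have h := esf_ee_add hζ (-x) x
  rw [neg_add_cancel] at h
  simp only [ZMod.val_zero, pow_zero] at h
  exact eq_inv_of_mul_eq_one_left h.symm

end auxESF

/-- with `p = 2^t - 1`, `q = exp(2πi/p)`, `f(k) = ∑_{j<t} q^{k 2^j}` and
`P_n` the distribution of `X_n` (`X_0 = 0`, `X_{n+1} = 2X_n + b_n mod p`, with
`P(b_n=1)=a`, `P(b_n=0)=b`, `P(b_n=-1)=c`), if `n = r t` then `E_{P_n}(f) = t Π₁^r`,
where `Π₁ = ∏_{α<t} (a q^{2^α} + b + c q^{-2^α})`. -/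
theorem expectation_separating_function (t : ℕ) (ht : 2 ≤ t) (p : ℕ) [NeZero p]
    (hp : p = 2^t - 1) (a b c : ℝ) (ha : 0 ≤ a) (hb : 0 ≤ b) (hc : 0 ≤ c)
    (habc : a + b + c = 1) (P : ℕ → ZMod p → ℝ)
    (hP0 : ∀ x, P 0 x = if x = 0 then 1 else 0)
    (hPs : ∀ n x, P (n+1) x = ∑ y : ZMod p, P n y *
      (if x - 2*y = 1 then a else if x - 2*y = 0 then b
        else if x - 2*y = -1 then c else 0))
    (r n : ℕ) (hn : n = r * t) :
    ∑ k : ZMod p, (P n k : ℂ) *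
        (∑ j ∈ Finset.range t, Complex.exp (2 * Real.pi * Complex.I / p) ^ (k.val * 2^j))
      = t * (∏ α ∈ Finset.range t,
          ((a : ℂ) * Complex.exp (2 * Real.pi * Complex.I / p) ^ ((2^α : ℕ)) + b
            + c * Complex.exp (2 * Real.pi * Complex.I / p) ^ (-((2:ℤ)^α)))) ^ r := by
  subst hn
  set ζ : ℂ := Complex.exp (2 * Real.pi * Complex.I / p) with hζdef
  have hpc0 : (p : ℂ) ≠ 0 := Nat.cast_ne_zero.mpr (NeZero.ne p)
  have hζp : ζ ^ p = 1 := by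
    rw [hζdef, ← Complex.exp_nat_mul]
    have h1 : (p:ℂ) * (2 * Real.pi * Complex.I / p) = 2 * Real.pi * Complex.I := by
      field_simp
    rw [h1, Complex.exp_two_pi_mul_I]
  have hζ0 : ζ ≠ 0 := Complex.exp_ne_zero _
  have hp3 : 3 ≤ p := by
    have h4 : 2^2 ≤ 2 ^ t := Nat.pow_le_pow_right (by norm_num) ht
    omega
  have hne : ∀ m : ℕ, 0 < m → m < p → ((m : ℕ) : ZMod p) ≠ 0 := by
    intro m hm0 hmp h
    rw [ZMod.natCast_eq_zero_iff] at h
    exact absurd (Nat.le_of_dvd hm0 h) (by omega)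
  have h10 : (1 : ZMod p) ≠ 0 := by
    have := hne 1 one_pos (by omega); simpa using this
  have h1m1 : (1 : ZMod p) ≠ -1 := by
    intro h
    have h2 : ((2:ℕ) : ZMod p) = 0 := by
      push_cast
      linear_combination h
    exact hne 2 (by norm_num) (by omega) h2
  have h0m1 : (0 : ZMod p) ≠ -1 := fun h => h10 (by linear_combination h)
  -- abbreviations
  set g : ZMod p → ℂ := fun m => (a:ℂ) * ζ ^ m.val + b + c * ζ ^ (-m).val with hgdef
  set G : ℕ → ZMod p → ℂ := fun n m => ∑ k : ZMod p, (P n k : ℂ) * ζ ^ (m * k).val with hGdef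
  -- G at time 0
  have hG0 : ∀ m, G 0 m = 1 := by
    intro m
    simp [hGdef, hP0, apply_ite (fun x : ℝ => (x:ℂ)), Finset.sum_ite_eq']
  -- weight sum
  have hw : ∀ m : ZMod p,
      (∑ x : ZMod p, (if x = 1 then (a:ℂ) else if x = 0 then (b:ℂ)
        else if x = -1 then (c:ℂ) else 0) * ζ ^ (m * x).val) = g m := by
    intro m
    have hsplit : ∀ x : ZMod p,
        (if x = 1 then (a:ℂ) else if x = 0 then (b:ℂ) else if x = -1 then (c:ℂ) else 0)
            * ζ ^ (m * x).val
          = (if x = 1 then (a:ℂ) * ζ ^ (m * x).val else 0)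
            + (if x = 0 then (b:ℂ) * ζ ^ (m * x).val else 0)
            + (if x = -1 then (c:ℂ) * ζ ^ (m * x).val else 0) := by
      intro x
      by_cases h1 : x = 1
      · subst h1; simp [h10, h1m1]
      by_cases h2 : x = 0
      · subst h2; simp [Ne.symm h10, h0m1]
      by_cases h3 : x = -1
      · subst h3; simp [Ne.symm h1m1, Ne.symm h0m1]
      simp [h1, h2, h3]
    rw [Finset.sum_congr rfl (fun x _ => hsplit x)]
    rw [Finset.sum_add_distrib, Finset.sum_add_distrib]
    simp only [Finset.sum_ite_eq', Finset.mem_univ, if_true]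
    rw [mul_one, mul_zero, mul_neg_one, ZMod.val_zero, pow_zero, mul_one]
  -- one-step recursion
  have hB : ∀ n m, G (n+1) m = g m * G n (2*m) := by
    intro n m
    have hcast : ∀ x : ZMod p, ((P (n+1) x : ℝ) : ℂ)
        = ∑ y : ZMod p, (P n y : ℂ) * (if x - 2*y = 1 then (a:ℂ)
            else if x - 2*y = 0 then (b:ℂ) else if x - 2*y = -1 then (c:ℂ) else 0) := by
      intro x
      rw [hPs]
      push_cast [apply_ite (fun x : ℝ => (x:ℂ))]
      ring
    calc G (n+1) m = ∑ x : ZMod p, (∑ y : ZMod p, (P n y : ℂ) * (if x - 2*y = 1 then (a:ℂ)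
            else if x - 2*y = 0 then (b:ℂ) else if x - 2*y = -1 then (c:ℂ) else 0))
          * ζ ^ (m * x).val := by
            rw [hGdef]
            exact Finset.sum_congr rfl fun x _ => by rw [hcast]
      _ = ∑ y : ZMod p, (P n y : ℂ) * ∑ x : ZMod p, (if x - 2*y = 1 then (a:ℂ)
            else if x - 2*y = 0 then (b:ℂ) else if x - 2*y = -1 then (c:ℂ) else 0)
          * ζ ^ (m * x).val := by
            simp_rw [Finset.sum_mul]
            rw [Finset.sum_comm]
            simp_rw [mul_assoc, ← Finset.mul_sum]
      _ = ∑ y : ZMod p, (P n y : ℂ) * (g m * ζ ^ ((2*m) * y).val) := by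
        refine Finset.sum_congr rfl fun y _ => ?_
        congr 1
        have hre : (∑ x : ZMod p, (if x - 2*y = 1 then (a:ℂ)
            else if x - 2*y = 0 then (b:ℂ) else if x - 2*y = -1 then (c:ℂ) else 0)
            * ζ ^ (m * x).val)
            = ∑ x : ZMod p, ((if x = 1 then (a:ℂ) else if x = 0 then (b:ℂ)
              else if x = -1 then (c:ℂ) else 0) * ζ ^ (m * x).val) * ζ ^ ((2*m) * y).val := by
          refine (Fintype.sum_equiv (Equiv.addRight (2*y)) _ _ fun x => ?_).symm
          simp only [Equiv.coe_addRight, add_sub_cancel_right]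
          have harg : m * (x + 2*y) = m * x + (2*m) * y := by ring
          rw [harg, esf_ee_add hζp]
          ring
        rw [hre, ← Finset.sum_mul, hw]
      _ = g m * G n (2*m) := by
        rw [hGdef, Finset.mul_sum]
        exact Finset.sum_congr rfl fun y _ => by ring
  -- iterate t steps
  have h2t : (2 : ZMod p)^t = 1 := by
    have h1 : ((2^t : ℕ) : ZMod p) = ((p + 1 : ℕ) : ZMod p) := by
      congr 1
      have h4 : 2^2 ≤ 2 ^ t := Nat.pow_le_pow_right (by norm_num) ht
      omega
    push_cast at h1
    rw [ZMod.natCast_self] at h1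
    simpa using h1
  have hiter : ∀ s n m, G (n + s) m
      = (∏ i ∈ Finset.range s, g ((2:ZMod p)^i * m)) * G n ((2:ZMod p)^s * m) := by
    intro s
    induction s with
    | zero => intro n m; simp
    | succ s ih =>
      intro n m
      have e1 : ∀ i : ℕ, (2:ZMod p)^i * (2*m) = 2^(i+1) * m := fun i => by ring
      have e2 : (2:ZMod p)^s * (2*m) = 2^(s+1) * m := by ring
      calc G (n + (s+1)) m = G ((n+s)+1) m := by ring_nf
        _ = g m * G (n+s) (2*m) := hB _ _
        _ = g m * ((∏ i ∈ Finset.range s, g ((2:ZMod p)^i * (2*m)))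
              * G n ((2:ZMod p)^s * (2*m))) := by rw [ih]
        _ = (∏ i ∈ Finset.range (s+1), g ((2:ZMod p)^i * m)) * G n ((2:ZMod p)^(s+1) * m) := by
            simp only [e1, e2, Finset.prod_range_succ']
            rw [pow_zero, one_mul]
            ring
  have hGt : ∀ n m, G (n + t) m = (∏ i ∈ Finset.range t, g ((2:ZMod p)^i * m)) * G n m := by
    intro n m
    rw [hiter, h2t, one_mul]
  have hGrt : ∀ (r : ℕ) m, G (r*t) m = (∏ i ∈ Finset.range t, g ((2:ZMod p)^i * m))^r := by
    intro r
    induction r with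
    | zero => intro m; simpa using hG0 m
    | succ r ih =>
      intro m
      have e3 : (r+1)*t = r*t + t := by ring
      rw [e3, hGt, ih, pow_succ]
      ring
  -- invariance of the product
  have hH2 : ∀ m : ZMod p, (∏ i ∈ Finset.range t, g ((2:ZMod p)^i * (2*m)))
      = ∏ i ∈ Finset.range t, g ((2:ZMod p)^i * m) := by
    intro m
    obtain ⟨t', rfl⟩ : ∃ t', t = t' + 1 := ⟨t - 1, by omega⟩
    have e1 : ∀ i : ℕ, (2:ZMod p)^i * (2*m) = 2^(i+1) * m := fun i => by ring
    have e2 : (2:ZMod p)^(t'+1) * m = m := by rw [h2t, one_mul]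
    rw [Finset.prod_range_succ, Finset.prod_range_succ']
    simp only [e1, e2, pow_zero, one_mul]
  have hHj : ∀ j : ℕ, (∏ i ∈ Finset.range t, g ((2:ZMod p)^i * (2:ZMod p)^j))
      = ∏ i ∈ Finset.range t, g ((2:ZMod p)^i * 1) := by
    intro j
    induction j with
    | zero => simp
    | succ j ih =>
      have e1 : ∀ i : ℕ, (2:ZMod p)^i * (2:ZMod p)^(j+1) = 2^i * (2 * 2^j) :=
        fun i => by ring
      simp only [e1]
      rw [hH2]
      exact ih
  -- rewrite the LHS
  have hkey : ∀ (j : ℕ) (k : ZMod p), ζ ^ (k.val * 2^j) = ζ ^ (((2:ZMod p)^j * k).val) := by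
    intro j k
    have h1 : (2:ZMod p)^j * k = ((2^j * k.val : ℕ) : ZMod p) := by
      push_cast [ZMod.natCast_zmod_val]
      ring
    rw [h1, esf_ee_natCast hζp, mul_comm]
  have hLHS : ∑ k : ZMod p, (P (r*t) k : ℂ) * (∑ j ∈ Finset.range t, ζ ^ (k.val * 2^j))
      = ∑ j ∈ Finset.range t, G (r*t) ((2:ZMod p)^j) := by
    simp_rw [Finset.mul_sum]
    rw [Finset.sum_comm]
    refine Finset.sum_congr rfl fun j _ => Finset.sum_congr rfl fun k _ => ?_
    rw [hkey]
  -- identify factors with the statement's product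
  have hfac : ∀ α : ℕ, g ((2:ZMod p)^α * 1)
      = (a:ℂ) * ζ ^ ((2^α : ℕ)) + b + c * ζ ^ (-((2:ℤ)^α)) := by
    intro α
    have h1 : (2:ZMod p)^α * 1 = ((2^α : ℕ) : ZMod p) := by push_cast; ring
    rw [h1, hgdef]
    simp only
    rw [esf_ee_natCast hζp, esf_ee_neg hζp, esf_ee_natCast hζp]
    congr 1
    rw [← zpow_natCast ζ (2^α), ← zpow_neg]
    congr 1
  rw [hLHS]
  have hsum : ∀ j ∈ Finset.range t, G (r*t) ((2:ZMod p)^j)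
      = (∏ α ∈ Finset.range t, ((a:ℂ) * ζ ^ ((2^α : ℕ)) + b + c * ζ ^ (-((2:ℤ)^α))))^r := by
    intro j _
    rw [hGrt, hHj]
    congr 1
    exact Finset.prod_congr rfl fun α _ => hfac α
  rw [Finset.sum_congr rfl hsum, Finset.sum_const, Finset.card_range, nsmul_eq_mul]
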